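/- Let A be a 1-bounded turning metric Jordan arc, and 0 < δ ≤ diam A. For each n, divide A into n subarcs of equal diameter, and let n be the smallest integer for which this common diameter is ≤ δ. Then each of the n subarcs has diameter ≥ δ/2. -/

import Mathlib

open Metric Set

noncomputable section

abbrev I01 := Set.Icc (0 : ℝ) 1

/-- The subarc of a Jordan arc `A` (parametrized by `e : I01 ≃ₜ A`) between `x` and `y`. -/
def subarc {A : Type*} [MetricSpace A] (e : I01 ≃ₜ A) (x y : A) : Set A :=
  e '' Set.uIcc (e.symm x) (e.symm y)

/-- `s` divides the arc `A` into `n` consecutive subarcs, each of diameter `D`. -/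
def IsEqualDivision {A : Type*} [MetricSpace A] (e : I01 ≃ₜ A)
    (n : ℕ) (s : ℕ → I01) (D : ℝ) : Prop :=
  s 0 = ⟨0, by norm_num⟩ ∧ s n = ⟨1, by norm_num⟩ ∧ (∀ i < n, s i < s (i + 1)) ∧
    ∀ i < n, diam (e '' Set.Icc (s i) (s (i + 1))) = D


open Filter Topology

namespace EqDivAux


/-- Right endpoint of an interval starting at `a` on which `F a ·` reaches `min c (F a 1)`. -/
def rho (F : ℝ → ℝ → ℝ) (a c : ℝ) : ℝ :=
  sSup {t | t ∈ Icc a 1 ∧ F a t ≤ min c (F a 1)}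

variable {F : ℝ → ℝ → ℝ}

lemma Fmono' (hFm : ∀ a b b', 0 ≤ a → a ≤ b → b < b' → b' ≤ 1 → F a b < F a b')
    {a b b' : ℝ} (h0 : 0 ≤ a) (h1 : a ≤ b) (h2 : b ≤ b') (h3 : b' ≤ 1) : F a b ≤ F a b' := by
  rcases eq_or_lt_of_le h2 with h | h
  · rw [h]
  · exact (hFm a b b' h0 h1 h h3).le

lemma F_nonneg (hF0 : ∀ a, F a a = 0)
    (hFm : ∀ a b b', 0 ≤ a → a ≤ b → b < b' → b' ≤ 1 → F a b < F a b')
    {a b : ℝ} (h0 : 0 ≤ a) (h1 : a ≤ b) (h2 : b ≤ 1) : 0 ≤ F a b := by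
  rw [← hF0 a]; exact Fmono' hFm h0 le_rfl h1 h2

lemma contF1 (hFc : Continuous fun p : ℝ × ℝ => F p.1 p.2) (a : ℝ) : Continuous (F a) :=
  hFc.comp (continuous_const.prodMk continuous_id)

lemma rho_spec (hFc : Continuous fun p : ℝ × ℝ => F p.1 p.2) (hF0 : ∀ a, F a a = 0)
    (hFm : ∀ a b b', 0 ≤ a → a ≤ b → b < b' → b' ≤ 1 → F a b < F a b')
    {a c : ℝ} (ha : a ∈ Icc (0:ℝ) 1) (hc : 0 ≤ c) :
    rho F a c ∈ Icc a 1 ∧ F a (rho F a c) = min c (F a 1) := by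
  have hFa1 : 0 ≤ F a 1 := F_nonneg hF0 hFm ha.1 ha.2 le_rfl
  have hmem : min c (F a 1) ∈ Icc (F a a) (F a 1) := by
    constructor
    · rw [hF0]; exact le_min hc hFa1
    · exact min_le_right _ _
  obtain ⟨t, htmem, hteq⟩ := intermediate_value_Icc ha.2 ((contF1 hFc a).continuousOn) hmem
  have hgt : IsGreatest {t | t ∈ Icc a 1 ∧ F a t ≤ min c (F a 1)} t := by
    constructor
    · exact ⟨htmem, hteq.le⟩
    · intro y hy
      by_contra hcon
      push_neg at hcon
      have := hFm a t y ha.1 htmem.1 hcon hy.1.2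
      rw [hteq] at this
      exact absurd hy.2 (not_le.2 this)
  have : rho F a c = t := hgt.csSup_eq
  rw [this]; exact ⟨htmem, hteq⟩

lemma rho_unique (hFm : ∀ a b b', 0 ≤ a → a ≤ b → b < b' → b' ≤ 1 → F a b < F a b')
    {a : ℝ} (h0 : 0 ≤ a) {t t' : ℝ} (ht : t ∈ Icc a 1) (ht' : t' ∈ Icc a 1)
    (h : F a t = F a t') : t = t' := by
  by_contra hne
  rcases lt_or_gt_of_ne hne with hlt | hlt
  · exact absurd h (ne_of_lt (hFm a t t' h0 ht.1 hlt ht'.2))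
  · exact absurd h.symm (ne_of_lt (hFm a t' t h0 ht'.1 hlt ht.2))

lemma rho_contOn (hFc : Continuous fun p : ℝ × ℝ => F p.1 p.2) (hF0 : ∀ a, F a a = 0)
    (hFm : ∀ a b b', 0 ≤ a → a ≤ b → b < b' → b' ≤ 1 → F a b < F a b') :
    ContinuousOn (fun p : ℝ × ℝ => rho F p.1 p.2) (Icc (0:ℝ) 1 ×ˢ Ici (0:ℝ)) := by
  rintro ⟨a0, c0⟩ ⟨ha0, hc0⟩
  obtain ⟨ht0mem, ht0eq⟩ := rho_spec hFc hF0 hFm ha0 hc0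
  set t0 := rho F a0 c0 with ht0def
  rw [ContinuousWithinAt, tendsto_order]
  constructor
  · intro l hl
    rcases lt_or_ge l 0 with hl0 | hl0
    · filter_upwards [self_mem_nhdsWithin] with q hq
      have := (rho_spec hFc hF0 hFm hq.1 hq.2).1.1
      have h01 : (0:ℝ) ≤ q.1 := hq.1.1
      linarith
    · rcases lt_or_ge l a0 with hla | hla
      · have hev : ∀ᶠ q : ℝ × ℝ in 𝓝 (a0, c0), l < q.1 :=
          (continuous_fst.tendsto (a0,c0)).eventually (eventually_gt_nhds hla)
        filter_upwards [hev.filter_mono nhdsWithin_le_nhds, self_mem_nhdsWithin] with q h1 h2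
        exact h1.trans_le (rho_spec hFc hF0 hFm h2.1 h2.2).1.1
      · -- a0 ≤ l < t0 ≤ 1
        have hlt0 : l < t0 := hl
        have hl1 : l ≤ 1 := hlt0.le.trans ht0mem.2
        have hkey : F a0 l < min c0 (F a0 1) := by
          rw [← ht0eq]
          exact hFm a0 l t0 ha0.1 hla hlt0 ht0mem.2
        have hcont2 : Continuous fun q : ℝ × ℝ => min q.2 (F q.1 1) - F q.1 l := by
          apply Continuous.sub
          · exact continuous_snd.min (hFc.comp (continuous_fst.prodMk continuous_const))
          · exact hFc.comp (continuous_fst.prodMk continuous_const)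
        have hev : ∀ᶠ q : ℝ × ℝ in 𝓝 (a0, c0), 0 < min q.2 (F q.1 1) - F q.1 l :=
          (hcont2.tendsto (a0,c0)).eventually (eventually_gt_nhds (sub_pos.mpr hkey))
        filter_upwards [hev.filter_mono nhdsWithin_le_nhds, self_mem_nhdsWithin] with q h1 h2
        obtain ⟨hqmem, hqeq⟩ := rho_spec hFc hF0 hFm h2.1 h2.2
        by_contra hcon
        push_neg at hcon
        have hle : F q.1 (rho F q.1 q.2) ≤ F q.1 l :=
          Fmono' hFm h2.1.1 hqmem.1 hcon hl1
        rw [hqeq] at hle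
        linarith
  · intro u hu
    rcases le_or_gt u 1 with hu1 | hu1
    · -- t0 < u ≤ 1
      have hau : a0 ≤ u := ht0mem.1.trans hu.le
      have hkey : min c0 (F a0 1) < F a0 u := by
        rw [← ht0eq]
        exact hFm a0 t0 u ha0.1 ht0mem.1 hu hu1
      have hcont2 : Continuous fun q : ℝ × ℝ => F q.1 u - min q.2 (F q.1 1) := by
        apply Continuous.sub
        · exact hFc.comp (continuous_fst.prodMk continuous_const)
        · exact continuous_snd.min (hFc.comp (continuous_fst.prodMk continuous_const))
      have hev : ∀ᶠ q : ℝ × ℝ in 𝓝 (a0, c0), 0 < F q.1 u - min q.2 (F q.1 1) :=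
        (hcont2.tendsto (a0,c0)).eventually (eventually_gt_nhds (sub_pos.mpr hkey))
      have hev2 : ∀ᶠ q : ℝ × ℝ in 𝓝 (a0, c0), q.1 < u := by
        rcases lt_or_ge a0 u with h | h
        · exact (continuous_fst.tendsto (a0,c0)).eventually (eventually_lt_nhds h)
        · exact absurd (ht0mem.1.trans_lt hu) (not_lt.2 h)
      filter_upwards [hev.filter_mono nhdsWithin_le_nhds, hev2.filter_mono nhdsWithin_le_nhds,
        self_mem_nhdsWithin] with q h1 h2 h3
      obtain ⟨hqmem, hqeq⟩ := rho_spec hFc hF0 hFm h3.1 h3.2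
      by_contra hcon
      push_neg at hcon
      have hle : F q.1 u ≤ F q.1 (rho F q.1 q.2) :=
        Fmono' hFm h3.1.1 h2.le hcon hqmem.2
      rw [hqeq] at hle
      linarith
    · filter_upwards [self_mem_nhdsWithin] with q hq
      exact ((rho_spec hFc hF0 hFm hq.1 hq.2).1.2).trans_lt hu1


/-- Greedy division points. -/
def Hseq (F : ℝ → ℝ → ℝ) (c : ℝ) : ℕ → ℝ
  | 0 => 0
  | (i+1) => rho F (Hseq F c i) c

section Hseq

variable (hFc : Continuous fun p : ℝ × ℝ => F p.1 p.2) (hF0 : ∀ a, F a a = 0)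
    (hFm : ∀ a b b', 0 ≤ a → a ≤ b → b < b' → b' ≤ 1 → F a b < F a b')

include hFc hF0 hFm

lemma Hseq_mem {c : ℝ} (hc : 0 ≤ c) : ∀ i, Hseq F c i ∈ Icc (0:ℝ) 1 := by
  intro i
  induction i with
  | zero => exact ⟨le_rfl, zero_le_one⟩
  | succ i ih =>
    have := (rho_spec hFc hF0 hFm ih hc).1
    exact ⟨ih.1.trans this.1, this.2⟩

lemma Hseq_le {c : ℝ} (hc : 0 ≤ c) (i : ℕ) : Hseq F c i ≤ Hseq F c (i+1) :=
  (rho_spec hFc hF0 hFm (Hseq_mem hFc hF0 hFm hc i) hc).1.1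

lemma Hseq_piece {c : ℝ} (hc : 0 ≤ c) (i : ℕ) :
    F (Hseq F c i) (Hseq F c (i+1)) = min c (F (Hseq F c i) 1) :=
  (rho_spec hFc hF0 hFm (Hseq_mem hFc hF0 hFm hc i) hc).2

lemma Hseq_one {c : ℝ} (hc : 0 ≤ c) {i j : ℕ} (hij : i ≤ j) (h : Hseq F c i = 1) :
    Hseq F c j = 1 := by
  induction j with
  | zero => exact (Nat.le_zero.mp hij) ▸ h
  | succ j ih =>
    rcases Nat.lt_or_ge i (j+1) with hlt | hge
    · have hj : Hseq F c j = 1 := ih (Nat.lt_succ_iff.mp hlt)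
      show rho F (Hseq F c j) c = 1
      rw [hj]
      have := (rho_spec hFc hF0 hFm (⟨zero_le_one, le_rfl⟩ : (1:ℝ) ∈ Icc (0:ℝ) 1) hc).1
      exact le_antisymm this.2 this.1
    · have : i = j + 1 := le_antisymm hij hge
      exact this ▸ h

lemma Hseq_zero : ∀ i, Hseq F 0 i = 0 := by
  intro i
  induction i with
  | zero => rfl
  | succ i ih =>
    have h0 : (0:ℝ) ≤ 0 := le_rfl
    have hm := Hseq_mem hFc hF0 hFm h0 i
    have hs := rho_spec hFc hF0 hFm hm h0
    have hv : F (Hseq F 0 i) (Hseq F 0 (i+1)) = 0 := by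
      have := hs.2
      rw [min_eq_left (F_nonneg hF0 hFm hm.1 hm.2 le_rfl)] at this
      exact this
    have : Hseq F 0 (i+1) = Hseq F 0 i := by
      apply rho_unique hFm hm.1 hs.1 ⟨le_rfl, hm.2⟩
      rw [hF0]
      exact hv
    rw [this, ih]

lemma Hseq_contOn (i : ℕ) : ContinuousOn (fun c => Hseq F c i) (Ici (0:ℝ)) := by
  induction i with
  | zero => exact continuousOn_const
  | succ i ih =>
    have : (fun c => Hseq F c (i+1)) =
        (fun p : ℝ × ℝ => rho F p.1 p.2) ∘ (fun c => (Hseq F c i, c)) := rfl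
    rw [this]
    apply ContinuousOn.comp (rho_contOn hFc hF0 hFm) (ih.prodMk continuousOn_id)
    intro c hc
    exact ⟨Hseq_mem hFc hF0 hFm hc i, hc⟩

/-- The abstract equal-division lemma. -/
lemma exists_eq_div (hpos : 0 < F 0 1) (k : ℕ) (hk : 1 ≤ k) :
    ∃ (t : ℕ → ℝ) (c : ℝ), 0 < c ∧ t 0 = 0 ∧ t k = 1 ∧
      (∀ i, t i ∈ Icc (0:ℝ) 1) ∧ (∀ i < k, t i < t (i+1)) ∧
      (∀ i < k, F (t i) (t (i+1)) = c) := by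
  classical
  set Ψ : ℝ → ℝ := fun c => F (Hseq F c (k-1)) 1 with hΨ
  have hΨcont : ContinuousOn Ψ (Ici (0:ℝ)) := by
    have : Ψ = (fun p : ℝ × ℝ => F p.1 p.2) ∘ (fun c => (Hseq F c (k-1), (1:ℝ))) := rfl
    rw [this]
    exact hFc.comp_continuousOn ((Hseq_contOn hFc hF0 hFm (k-1)).prodMk continuousOn_const)
  have hΨ0 : Ψ 0 = F 0 1 := by
    rw [hΨ]; simp only []
    rw [Hseq_zero hFc hF0 hFm]
  have hΨend : Ψ (F 0 1) - F 0 1 ≤ 0 := by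
    rcases eq_or_lt_of_le hk with h1 | h2
    · have hk0 : k - 1 = 0 := by omega
      have : Ψ (F 0 1) = F 0 1 := by
        show F (Hseq F (F 0 1) (k-1)) 1 = F 0 1
        rw [hk0]
        rfl
      linarith
    · have h1 : Hseq F (F 0 1) 1 = 1 := by
        show rho F (Hseq F (F 0 1) 0) (F 0 1) = 1
        show rho F 0 (F 0 1) = 1
        have hs := rho_spec hFc hF0 hFm (⟨le_rfl, zero_le_one⟩ : (0:ℝ) ∈ Icc (0:ℝ) 1) hpos.le
        have hv : F 0 (rho F 0 (F 0 1)) = F 0 1 := by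
          rw [hs.2, min_self]
        exact rho_unique hFm le_rfl hs.1 ⟨zero_le_one, le_rfl⟩ hv
      have hk1 : Hseq F (F 0 1) (k-1) = 1 := Hseq_one hFc hF0 hFm hpos.le (by omega) h1
      have : Ψ (F 0 1) = 0 := by
        show F (Hseq F (F 0 1) (k-1)) 1 = 0
        rw [hk1, hF0]
      linarith
  obtain ⟨c, hcmem, hceq⟩ : ∃ c ∈ Icc (0:ℝ) (F 0 1), Ψ c - c = 0 := by
    have hGc : ContinuousOn (fun c => Ψ c - c) (Icc (0:ℝ) (F 0 1)) :=
      (hΨcont.mono (fun x hx => hx.1)).sub continuousOn_id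
    have := intermediate_value_Icc' hpos.le hGc
    have h0mem : (0:ℝ) ∈ Icc (Ψ (F 0 1) - F 0 1) (Ψ 0 - 0) := by
      constructor
      · exact hΨend
      · rw [hΨ0]; linarith
    obtain ⟨c, hc1, hc2⟩ := this h0mem
    exact ⟨c, hc1, hc2⟩
  have hΨc : Ψ c = c := by linarith
  have hcpos : 0 < c := by
    rcases eq_or_lt_of_le hcmem.1 with h | h
    · exfalso
      rw [← h] at hΨc
      rw [hΨ0] at hΨc
      linarith
    · exact h
  -- all H i c < 1 for i ≤ k-1
  have hHlt : ∀ i ≤ k - 1, Hseq F c i < 1 := by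
    intro i hi
    rcases lt_or_eq_of_le (Hseq_mem hFc hF0 hFm hcmem.1 i).2 with h | h
    · exact h
    · exfalso
      have h2 := Hseq_one hFc hF0 hFm hcmem.1 hi h
      have h3 : Ψ c = 0 := by
        show F (Hseq F c (k-1)) 1 = 0
        rw [h2, hF0]
      rw [hΨc] at h3
      linarith
  set t : ℕ → ℝ := fun i => if i < k then Hseq F c i else 1 with htdef
  have hpieceval : ∀ i < k, F (t i) (t (i+1)) = c := by
    intro i hi
    rcases Nat.lt_or_ge (i+1) k with h2 | h2
    · -- i + 1 < k, so i ≤ k - 2, i+1 ≤ k-1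
      have hti : t i = Hseq F c i := by simp [htdef, hi]
      have hti1 : t (i+1) = Hseq F c (i+1) := by simp [htdef, h2]
      rw [hti, hti1, Hseq_piece hFc hF0 hFm hcmem.1 i]
      -- show min = c, i.e. c ≤ F (H i) 1
      rcases le_or_gt c (F (Hseq F c i) 1) with h | h
      · exact min_eq_left h
      · exfalso
        have hmem := Hseq_mem hFc hF0 hFm hcmem.1 i
        have hp := Hseq_piece hFc hF0 hFm hcmem.1 i
        rw [min_eq_right h.le] at hp
        have h1 : Hseq F c (i+1) = 1 := by
          apply rho_unique hFm hmem.1 (rho_spec hFc hF0 hFm hmem hcmem.1).1 ⟨hmem.2, le_rfl⟩ hp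
        exact absurd h1 (ne_of_lt (hHlt (i+1) (by omega)))
    · -- i+1 = k, i = k-1
      have hik : i = k - 1 := by omega
      have hti : t i = Hseq F c i := if_pos hi
      have hti1 : t (i+1) = 1 := if_neg (by omega)
      rw [hti, hti1, hik]
      exact hΨc
  refine ⟨t, c, hcpos, ?_, ?_, ?_, ?_, hpieceval⟩
  · have : t 0 = Hseq F c 0 := if_pos (by omega)
    rw [this]; rfl
  · exact if_neg (by omega)
  · intro i
    rcases Nat.lt_or_ge i k with h | h
    · simp only [htdef, if_pos h]
      exact Hseq_mem hFc hF0 hFm hcmem.1 i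
    · simp only [htdef, if_neg (by omega : ¬ i < k)]
      exact ⟨zero_le_one, le_rfl⟩
  · intro i hi
    have hle : t i ≤ t (i+1) := by
      rcases Nat.lt_or_ge (i+1) k with h2 | h2
      · simp only [htdef, if_pos hi, if_pos h2]
        exact Hseq_le hFc hF0 hFm hcmem.1 i
      · simp only [htdef, if_pos hi, if_neg (by omega : ¬ i+1 < k)]
        exact (Hseq_mem hFc hF0 hFm hcmem.1 i).2
    rcases eq_or_lt_of_le hle with h | h
    · exfalso
      have := hpieceval i hi
      rw [← h, hF0] at this
      linarith
    · exact h

end Hseq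



lemma pigeon (n : ℕ) (hn : 2 ≤ n) (u v : ℕ → ℝ)
    (hu0 : u 0 = 0) (hv0 : v 0 = 0) (hun : u n = 1)
    (humono : ∀ i j, i ≤ j → j ≤ n → u i ≤ u j)
    (hvle : ∀ j, v j ≤ 1) :
    ∃ j < n - 1, ∃ i, i + 2 ≤ n ∧ u i ≤ v j ∧ v (j+1) ≤ u (i+2) := by
  by_contra hcon
  push_neg at hcon
  have inv : ∀ j, 2*j ≤ n → j ≤ n - 1 → u (2*j) ≤ v j := by
    intro j
    induction j with
    | zero =>
      intro _ _
      simp only [Nat.mul_zero, hu0, hv0, le_refl]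
    | succ j ih =>
      intro h1 h2
      have hj : j < n - 1 := by omega
      have ihh := ih (by omega) (by omega)
      have hco := hcon j hj (2*j) (by omega) ihh
      have heq : 2*(j+1) = 2*j+2 := by ring
      rw [heq]
      linarith
  set j' := (n-1)/2 with hj'
  have hjlt : j' < n - 1 := by omega
  have h1 : u (n-2) ≤ v j' :=
    le_trans (humono (n-2) (2*j') (by omega) (by omega)) (inv j' (by omega) (by omega))
  have hco := hcon j' hjlt (n-2) (by omega) h1
  have hne : n - 2 + 2 = n := by omega
  rw [hne, hun] at hco
  exact absurd (hvle (j'+1)) (not_le.2 hco)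


section Main

variable {A : Type*} [MetricSpace A] (e : I01 ≃ₜ A)
    (h1bt : ∀ x y : A, diam (subarc e x y) = dist x y)

include e in
lemma bounded_all (s' : Set A) : Bornology.IsBounded s' := by
  have : CompactSpace A := Homeomorph.compactSpace e
  exact (isCompact_univ.isBounded).subset (subset_univ s')

include h1bt in
lemma key_diam {x y : I01} (hxy : x ≤ y) : diam (e '' Icc x y) = dist (e x) (e y) := by
  have h := h1bt (e x) (e y)
  rwa [subarc, e.symm_apply_apply, e.symm_apply_apply, uIcc_of_le hxy] at h

include h1bt in
lemma dist_mono' {a a' b' b : I01} (h1 : a ≤ a') (h2 : a' ≤ b') (h3 : b' ≤ b) :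
    dist (e a') (e b') ≤ dist (e a) (e b) := by
  rw [← key_diam e h1bt (h1.trans (h2.trans h3))]
  exact dist_le_diam_of_mem (bounded_all e _) ⟨a', ⟨h1, h2.trans h3⟩, rfl⟩
    ⟨b', ⟨h1.trans h2, h3⟩, rfl⟩

lemma Icc_lo_hi : Icc (⟨0, by norm_num⟩ : I01) ⟨1, by norm_num⟩ = univ := by
  ext x
  simp only [mem_Icc, mem_univ, iff_true, ← Subtype.coe_le_coe]
  exact ⟨x.2.1, x.2.2⟩

include h1bt in
lemma diam_univ_eq :
    diam (univ : Set A) = dist (e ⟨0, by norm_num⟩) (e ⟨1, by norm_num⟩) := by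
  rw [← key_diam e h1bt (by rw [← Subtype.coe_le_coe]; norm_num), Icc_lo_hi, image_univ,
    e.surjective.range_eq]

end Main

end EqDivAux

open EqDivAux

/-- If `n` is the smallest number of equal-diameter subarcs of a `1`-bounded turning arc
with common diameter `≤ δ`, then this common diameter is `≥ δ/2`. -/
theorem equal_division_lower_bound
    {A : Type*} [MetricSpace A] (e : I01 ≃ₜ A)
    (h1bt : ∀ x y : A, diam (subarc e x y) = dist x y)
    (δ : ℝ) (hδ0 : 0 < δ) (hδ : δ ≤ diam (Set.univ : Set A))
    (n : ℕ) (hn : 1 ≤ n) (s : ℕ → I01) (D : ℝ)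
    (hdiv : IsEqualDivision e n s D) (hD : D ≤ δ)
    (hmin : ∀ k, 1 ≤ k → k < n → ∀ (t : ℕ → I01) (D' : ℝ),
      IsEqualDivision e k t D' → δ < D') :
    δ / 2 ≤ D := by
  classical
  obtain ⟨hs0, hsn, hslt, hsd⟩ := hdiv
  have hsdist : ∀ i < n, dist (e (s i)) (e (s (i+1))) = D := by
    intro i hi
    rw [← key_diam e h1bt (hslt i hi).le]
    exact hsd i hi
  rcases eq_or_lt_of_le hn with h1 | h2
  · -- n = 1 : the unique piece is the whole arc
    have h10 : (0:ℕ) < n := by omega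
    have hD1 := hsd 0 h10
    rw [show (0:ℕ)+1 = n by omega, hs0, hsn, Icc_lo_hi, image_univ,
      e.surjective.range_eq] at hD1
    rw [hD1] at hδ
    linarith
  by_contra hcon
  push_neg at hcon
  set k := n - 1 with hk
  have hk1 : 1 ≤ k := by omega
  have hkn : k < n := by omega
  -- real-valued distance function
  set pr : ℝ → I01 := fun x => projIcc (0:ℝ) 1 zero_le_one x with hprdef
  have hpr : ∀ x : I01, pr (x:ℝ) = x := by
    intro x
    simp only [hprdef]
    exact projIcc_of_mem zero_le_one x.2
  set dR : ℝ → ℝ → ℝ := fun a b => dist (e (pr a)) (e (pr b)) with hdRdef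
  have hdRcont : Continuous fun p : ℝ × ℝ => dR p.1 p.2 := by
    apply Continuous.dist
    · exact e.continuous.comp (continuous_projIcc.comp continuous_fst)
    · exact e.continuous.comp (continuous_projIcc.comp continuous_snd)
  have hdRmono : ∀ a a' b' b : ℝ, a ≤ a' → a' ≤ b' → b' ≤ b → dR a' b' ≤ dR a b := by
    intro a a' b' b ha hb hc
    exact dist_mono' e h1bt (monotone_projIcc zero_le_one ha)
      (monotone_projIcc zero_le_one hb) (monotone_projIcc zero_le_one hc)
  set η : ℕ → ℝ := fun m => 1/((m:ℝ)+1) with hηdef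
  have hηpos : ∀ m, 0 < η m := by
    intro m
    simp only [hηdef]
    positivity
  have hηle : ∀ m, η m ≤ 1 := by
    intro m
    simp only [hηdef]
    rw [div_le_one (by positivity)]
    have : (0:ℝ) ≤ (m:ℝ) := Nat.cast_nonneg m
    linarith
  set Fm : ℕ → ℝ → ℝ → ℝ := fun m a b => dR a b + η m * (b - a) with hFmdef
  have hFc : ∀ m, Continuous fun p : ℝ × ℝ => Fm m p.1 p.2 :=
    fun m => hdRcont.add (continuous_const.mul (continuous_snd.sub continuous_fst))
  have hF0 : ∀ m a, Fm m a a = 0 := by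
    intro m a
    simp [hFmdef, hdRdef]
  have hFmono : ∀ m a b b', 0 ≤ a → a ≤ b → b < b' → b' ≤ 1 → Fm m a b < Fm m a b' := by
    intro m a b b' h0 hab hbb' hb'
    have hd : dR a b ≤ dR a b' := hdRmono a a b b' le_rfl hab hbb'.le
    have hlin : η m * (b - a) < η m * (b' - a) :=
      mul_lt_mul_of_pos_left (by linarith) (hηpos m)
    show dR a b + η m * (b - a) < dR a b' + η m * (b' - a)
    linarith
  have hFpos : ∀ m, 0 < Fm m 0 1 := by
    intro m
    have h1 : (0:ℝ) ≤ dR 0 1 := dist_nonneg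
    have h2 := hηpos m
    show 0 < dR 0 1 + η m * (1 - 0)
    nlinarith
  choose T C hCpos hT0 hTk hTmem hTlt hTpiece using
    fun m => exists_eq_div (hFc m) (hF0 m) (hFmono m) (hFpos m) k hk1
  -- monotonicity of s
  have hsmono : ∀ i j, i ≤ j → j ≤ n → s i ≤ s j := by
    intro i j hij hjn
    induction j with
    | zero =>
      have : i = 0 := by omega
      exact this ▸ le_rfl
    | succ j ih =>
      rcases Nat.lt_or_ge i (j+1) with h | h
      · exact le_trans (ih (by omega) (by omega)) (hslt j (by omega)).le
      · have : i = j+1 := by omega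
        exact this ▸ le_rfl
  -- upper bound for C m
  have hCub : ∀ m, C m ≤ 2*D + η m := by
    intro m
    obtain ⟨j, hj, i, hi2, hui, hvi⟩ :=
      pigeon n h2 (fun i => ((s i : I01) : ℝ)) (T m)
        (by show ((s 0 : I01) : ℝ) = 0; rw [hs0]) (hT0 m)
        (by show ((s n : I01) : ℝ) = 1; rw [hsn])
        (fun i j hij hjn => Subtype.coe_le_coe.2 (hsmono i j hij hjn))
        (fun j => (hTmem m j).2)
    have hjk : j < k := by omega
    have hpiece := hTpiece m j hjk
    have hd1 : dR (T m j) (T m (j+1)) ≤ dR ((s i : I01) : ℝ) ((s (i+2) : I01) : ℝ) :=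
      hdRmono _ _ _ _ hui (hTlt m j hjk).le hvi
    have hd2 : dR ((s i : I01) : ℝ) ((s (i+2) : I01) : ℝ) = dist (e (s i)) (e (s (i+2))) := by
      simp only [hdRdef, hpr]
    have hd3 : dist (e (s i)) (e (s (i+2))) ≤ D + D := by
      calc dist (e (s i)) (e (s (i+2)))
          ≤ dist (e (s i)) (e (s (i+1))) + dist (e (s (i+1))) (e (s (i+2))) :=
            dist_triangle _ _ _
        _ = D + D := by rw [hsdist i (by omega), hsdist (i+1) (by omega)]
    have hΔ : T m (j+1) - T m j ≤ 1 := by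
      have h5 := (hTmem m (j+1)).2
      have h6 := (hTmem m j).1
      linarith
    have hηm := (hηpos m).le
    have hCval : dR (T m j) (T m (j+1)) + η m * (T m (j+1) - T m j) = C m := hpiece
    have hmul : η m * (T m (j+1) - T m j) ≤ η m * 1 := mul_le_mul_of_nonneg_left hΔ hηm
    rw [mul_one] at hmul
    linarith
  -- lower bound
  have hClb : ∀ m, δ ≤ (k:ℝ) * C m := by
    intro m
    have htri := dist_le_range_sum_dist (fun i => e (pr (T m i))) k
    have h0eq : pr (T m 0) = (⟨0, by norm_num⟩ : I01) := by
      rw [hT0 m]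
      simp only [hprdef]
      exact projIcc_of_mem zero_le_one (by norm_num)
    have hkeq : pr (T m k) = (⟨1, by norm_num⟩ : I01) := by
      rw [hTk m]
      simp only [hprdef]
      exact projIcc_of_mem zero_le_one (by norm_num)
    have hterm : ∀ i ∈ Finset.range k,
        dist (e (pr (T m i))) (e (pr (T m (i+1)))) ≤ C m := by
      intro i hi
      rw [Finset.mem_range] at hi
      have hp : dR (T m i) (T m (i+1)) + η m * (T m (i+1) - T m i) = C m := hTpiece m i hi
      have hΔ0 : 0 ≤ T m (i+1) - T m i := by
        have := (hTlt m i hi).le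
        linarith
      have hdd : dist (e (pr (T m i))) (e (pr (T m (i+1)))) = dR (T m i) (T m (i+1)) := rfl
      nlinarith [mul_nonneg (hηpos m).le hΔ0]
    have hsum := Finset.sum_le_card_nsmul (Finset.range k) _ (C m) hterm
    rw [Finset.card_range, nsmul_eq_mul] at hsum
    have hdist : δ ≤ dist (e (pr (T m 0))) (e (pr (T m k))) := by
      rw [h0eq, hkeq]
      calc δ ≤ diam (univ : Set A) := hδ
        _ = _ := diam_univ_eq e h1bt
    calc δ ≤ dist (e (pr (T m 0))) (e (pr (T m k))) := hdist
      _ ≤ _ := htri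
      _ ≤ (k:ℝ) * C m := hsum
  -- compactness
  have hmemK : ∀ m, ((fun i : Fin (k+1) => T m i, C m)) ∈
      (Icc (fun _ : Fin (k+1) => (0:ℝ)) (fun _ => 1)) ×ˢ (Icc (0:ℝ) (2*D+1)) := by
    intro m
    constructor
    · rw [mem_Icc]
      constructor
      · exact fun i => (hTmem m i).1
      · exact fun i => (hTmem m i).2
    · refine ⟨(hCpos m).le, (hCub m).trans ?_⟩
      have := hηle m
      linarith
  obtain ⟨⟨x, c⟩, hxcK, φ, hφ, hconv⟩ :=
    (IsCompact.prod isCompact_Icc isCompact_Icc).tendsto_subseq hmemK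
  simp only [mem_prod, mem_Icc] at hxcK
  obtain ⟨⟨hxl, hxu⟩, hc0, hc2D1⟩ := hxcK
  have hx : ∀ i : Fin (k+1), Tendsto (fun m => T (φ m) i) atTop (𝓝 (x i)) := by
    intro i
    have h1 : Tendsto (fun m => (fun i : Fin (k+1) => T (φ m) (i:ℕ))) atTop (𝓝 x) :=
      (continuous_fst.tendsto _).comp hconv
    exact ((continuous_apply i).tendsto _).comp h1
  have hcC : Tendsto (fun m => C (φ m)) atTop (𝓝 c) := (continuous_snd.tendsto _).comp hconv
  have hη0 : Tendsto (fun m => η (φ m)) atTop (𝓝 0) :=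
    tendsto_one_div_add_atTop_nhds_zero_nat.comp hφ.tendsto_atTop
  -- limits of endpoints
  have hx0 : x ⟨0, by omega⟩ = 0 := by
    refine tendsto_nhds_unique (hx ⟨0, by omega⟩) ?_
    have : (fun m => T (φ m) ((⟨0, by omega⟩ : Fin (k+1)):ℕ)) = fun m => (0:ℝ) := by
      funext m
      exact hT0 (φ m)
    rw [this]
    exact tendsto_const_nhds
  have hxk : x ⟨k, by omega⟩ = 1 := by
    refine tendsto_nhds_unique (hx ⟨k, by omega⟩) ?_
    have : (fun m => T (φ m) ((⟨k, by omega⟩ : Fin (k+1)):ℕ)) = fun m => (1:ℝ) := by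
      funext m
      exact hTk (φ m)
    rw [this]
    exact tendsto_const_nhds
  have hxmono : ∀ i (hik : i < k), x ⟨i, by omega⟩ ≤ x ⟨i+1, by omega⟩ := by
    intro i hik
    exact le_of_tendsto_of_tendsto' (hx ⟨i, by omega⟩) (hx ⟨i+1, by omega⟩)
      (fun m => (hTlt (φ m) i hik).le)
  -- limit of the pieces
  have hxd : ∀ i (hik : i < k),
      dist (e (pr (x ⟨i, by omega⟩))) (e (pr (x ⟨i+1, by omega⟩))) = c := by
    intro i hik
    have hA : Tendsto (fun m => dR (T (φ m) i) (T (φ m) (i+1))) atTop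
        (𝓝 (dR (x ⟨i, by omega⟩) (x ⟨i+1, by omega⟩))) :=
      (hdRcont.tendsto _).comp ((hx ⟨i, by omega⟩).prodMk_nhds (hx ⟨i+1, by omega⟩))
    have hB : ∀ m, dR (T (φ m) i) (T (φ m) (i+1)) =
        C (φ m) - η (φ m) * (T (φ m) (i+1) - T (φ m) i) := by
      intro m
      have hp : dR (T (φ m) i) (T (φ m) (i+1)) +
          η (φ m) * (T (φ m) (i+1) - T (φ m) i) = C (φ m) := hTpiece (φ m) i hik
      linarith
    have hsq : Tendsto (fun m => η (φ m) * (T (φ m) (i+1) - T (φ m) i)) atTop (𝓝 0) := by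
      apply squeeze_zero
      · intro m
        have hΔ0 : 0 ≤ T (φ m) (i+1) - T (φ m) i := by
          have := (hTlt (φ m) i hik).le
          linarith
        exact mul_nonneg (hηpos _).le hΔ0
      · intro m
        have hΔ : T (φ m) (i+1) - T (φ m) i ≤ 1 := by
          have h5 := (hTmem (φ m) (i+1)).2
          have h6 := (hTmem (φ m) i).1
          linarith
        calc η (φ m) * (T (φ m) (i+1) - T (φ m) i) ≤ η (φ m) * 1 := by
              apply mul_le_mul_of_nonneg_left hΔ (hηpos _).le
          _ = η (φ m) := mul_one _
      · exact hη0
    have hC2 : Tendsto (fun m => C (φ m) - η (φ m) * (T (φ m) (i+1) - T (φ m) i)) atTop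
        (𝓝 (c - 0)) := hcC.sub hsq
    rw [sub_zero] at hC2
    have := tendsto_nhds_unique (hA.congr hB) hC2
    exact this
  -- bounds on c
  have hcle : c ≤ 2*D := by
    have hlim : Tendsto (fun m => 2*D + η (φ m)) atTop (𝓝 (2*D + 0)) :=
      tendsto_const_nhds.add hη0
    rw [add_zero] at hlim
    exact le_of_tendsto_of_tendsto' hcC hlim (fun m => hCub (φ m))
  have hcge : δ ≤ (k:ℝ) * c := by
    have hlim : Tendsto (fun m => (k:ℝ) * C (φ m)) atTop (𝓝 ((k:ℝ) * c)) :=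
      tendsto_const_nhds.mul hcC
    exact ge_of_tendsto' hlim (fun m => hClb (φ m))
  have hkR : (1:ℝ) ≤ (k:ℝ) := by exact_mod_cast hk1
  have hcpos : 0 < c := by nlinarith
  -- build the division in I01
  set tI : ℕ → I01 := fun i => if h : i < k + 1 then
      ⟨x ⟨i, h⟩, ⟨hxl ⟨i, h⟩, hxu ⟨i, h⟩⟩⟩ else ⟨1, by norm_num⟩ with htI
  have htIval : ∀ i (h : i < k + 1), tI i = ⟨x ⟨i, h⟩, ⟨hxl ⟨i, h⟩, hxu ⟨i, h⟩⟩⟩ := by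
    intro i h
    simp only [htI, dif_pos h]
  have htI0 : tI 0 = (⟨0, by norm_num⟩ : I01) := by
    rw [htIval 0 (by omega)]
    exact Subtype.ext hx0
  have htIk : tI k = (⟨1, by norm_num⟩ : I01) := by
    rw [htIval k (by omega)]
    exact Subtype.ext hxk
  have htIlt : ∀ i < k, tI i < tI (i+1) := by
    intro i hik
    rw [htIval i (by omega), htIval (i+1) (by omega)]
    refine Subtype.mk_lt_mk.mpr ?_
    refine lt_of_le_of_ne (hxmono i hik) ?_
    intro heq
    have := hxd i hik
    rw [heq, dist_self] at this
    linarith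
  have htIdiam : ∀ i < k, diam (e '' Icc (tI i) (tI (i+1))) = c := by
    intro i hik
    rw [key_diam e h1bt (htIlt i hik).le]
    have hpi : pr (x ⟨i, by omega⟩) = tI i := by
      rw [htIval i (by omega)]
      simp only [hprdef]
      exact projIcc_of_mem zero_le_one ⟨hxl _, hxu _⟩
    have hpi1 : pr (x ⟨i+1, by omega⟩) = tI (i+1) := by
      rw [htIval (i+1) (by omega)]
      simp only [hprdef]
      exact projIcc_of_mem zero_le_one ⟨hxl _, hxu _⟩
    rw [← hpi, ← hpi1]
    exact hxd i hik
  have hfinal := hmin k hk1 hkn tI c ⟨htI0, htIk, htIlt, htIdiam⟩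
  linarith
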